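/- Let Z be a homogeneous space with volume weight v and radial weight r, and suppose Z = Ω Γ⁻ W·z₀ where Ω ⊂ G is compact, Γ⁻ is contained in a lattice in A_Z, and W is finite. Assume: (i) on each piece Ω y·z₀ one has r(z) ≥ c₁ r(y·z₀) and v(z) ≥ c₂ v(y·z₀), (ii) vol_Z(Ω y·z₀)/v(y·z₀) is bounded uniformly in y, (iii) Σ_{a ∈ Γ} (1+‖log a‖)^{-s} < ∞ for s > dim 𝔞_Z, and (iv) r(aw·z₀) is comparable to ‖log a‖. Then ∫_Z (1 + r(z))^{-s} v(z)^{-1} dz < ∞ for every s > dim 𝔞_Z. -/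

import Mathlib

open MeasureTheory
open scoped ENNReal

/-- Integrability of `(1+r)^{-s} v^{-1}` on a real spherical space (abstract form
of the polar-decomposition argument). `Z` is covered by countably many pieces
`Ω y·z₀` indexed by `i ∈ I` (lattice points times a finite set, `y i` the base
point of the piece, `ℓ i = ‖log a‖`); on each piece `r` and `v` are bounded below
in terms of their values at `y i`, the measure of each piece is controlled by the
volume weight, the lattice sum `Σ (1+ℓ i)^{-s}` converges (for `s > dim 𝔞_Z`), and
`r(y i)` is comparable to `ℓ i`. Then `∫_Z (1+r)^{-s} v^{-1} dz < ∞`. -/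
theorem stmt15 {Z : Type*} [MeasurableSpace Z] (μ : Measure Z)
    (r v : Z → ℝ) (hr0 : ∀ z, 0 ≤ r z) (hv0 : ∀ z, 0 < v z)
    {I : Type*} [Countable I]
    (piece : I → Set Z) (y : I → Z) (ℓ : I → ℝ) (hℓ0 : ∀ i, 0 ≤ ℓ i)
    (hcover : (⋃ i, piece i) = Set.univ)
    (c₁ c₂ : ℝ) (hc₁ : 0 < c₁) (hc₂ : 0 < c₂)
    (hbelow : ∀ i, ∀ z ∈ piece i, c₁ * r (y i) ≤ r z ∧ c₂ * v (y i) ≤ v z)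
    (M : ℝ) (hM : ∀ i, μ (piece i) ≤ ENNReal.ofReal (M * v (y i)))
    (s : ℝ) (hs : 0 < s)
    (hsum : Summable fun i => (1 + ℓ i) ^ (-s))
    (d₁ d₂ : ℝ) (hd₁ : 0 < d₁) (hd₂ : 0 < d₂)
    (hcomp : ∀ i, d₁ * ℓ i ≤ r (y i) ∧ r (y i) ≤ d₂ * ℓ i) :
    ∫⁻ z, ENNReal.ofReal ((1 + r z) ^ (-s) / v z) ∂μ < ⊤ := by
  classical
  set m : ℝ := min 1 (c₁ * d₁) with hm
  have hm0 : 0 < m := lt_min one_pos (mul_pos hc₁ hd₁)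
  set M' : ℝ := max M 0 with hM'def
  have hM'0 : 0 ≤ M' := le_max_right _ _
  set B : I → ℝ := fun i => m ^ (-s) * (1 + ℓ i) ^ (-s) / (c₂ * v (y i)) with hBdef
  have hB0 : ∀ i, 0 ≤ B i := by
    intro i
    have h1 : (0:ℝ) ≤ m ^ (-s) := Real.rpow_nonneg hm0.le _
    have h2 : (0:ℝ) ≤ (1 + ℓ i) ^ (-s) := Real.rpow_nonneg (by linarith [hℓ0 i]) _
    have h3 : (0:ℝ) < c₂ * v (y i) := mul_pos hc₂ (hv0 _)
    exact div_nonneg (mul_nonneg h1 h2) h3.le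
  set T : I → Set Z := fun i => toMeasurable μ (piece i) with hTdef
  have hTmeas : ∀ i, MeasurableSet (T i) := fun i => measurableSet_toMeasurable μ _
  have hpt : ∀ z, ENNReal.ofReal ((1 + r z) ^ (-s) / v z)
      ≤ ∑' i, (T i).indicator (fun _ => ENNReal.ofReal (B i)) z := by
    intro z
    obtain ⟨i, hi⟩ : ∃ i, z ∈ piece i := by
      have hz : z ∈ ⋃ i, piece i := hcover.symm ▸ Set.mem_univ z
      simpa [Set.mem_iUnion] using hz
    have hzT : z ∈ T i := subset_toMeasurable μ _ hi
    have hr := (hbelow i z hi).1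
    have hv := (hbelow i z hi).2
    have hvy : 0 < v (y i) := hv0 _
    have hℓ := hℓ0 i
    have hml : m * ℓ i ≤ r z := by
      have h1 : d₁ * ℓ i ≤ r (y i) := (hcomp i).1
      have h2 : c₁ * (d₁ * ℓ i) ≤ c₁ * r (y i) := by nlinarith
      have h3 : m * ℓ i ≤ c₁ * d₁ * ℓ i :=
        mul_le_mul_of_nonneg_right (min_le_right _ _) hℓ
      nlinarith
    have hbase : m * (1 + ℓ i) ≤ 1 + r z := by
      have h1 : m ≤ 1 := min_le_left _ _
      nlinarith
    have hpow : (1 + r z) ^ (-s) ≤ m ^ (-s) * (1 + ℓ i) ^ (-s) := by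
      have h1 : (0:ℝ) < m * (1 + ℓ i) := mul_pos hm0 (by linarith)
      have h2 := Real.rpow_le_rpow_of_nonpos h1 hbase (neg_nonpos.mpr hs.le)
      rwa [Real.mul_rpow hm0.le (by linarith : (0:ℝ) ≤ 1 + ℓ i)] at h2
    have hle : (1 + r z) ^ (-s) / v z ≤ B i := by
      exact div_le_div₀ (mul_nonneg (Real.rpow_nonneg hm0.le _)
        (Real.rpow_nonneg (by linarith) _)) hpow (mul_pos hc₂ hvy) hv
    calc ENNReal.ofReal ((1 + r z) ^ (-s) / v z) ≤ ENNReal.ofReal (B i) :=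
          ENNReal.ofReal_le_ofReal hle
      _ = (T i).indicator (fun _ => ENNReal.ofReal (B i)) z :=
          (Set.indicator_of_mem hzT fun _ => ENNReal.ofReal (B i)).symm
      _ ≤ _ := ENNReal.le_tsum i
  set K : ℝ := m ^ (-s) * M' / c₂ with hKdef
  have hK0 : 0 ≤ K := div_nonneg (mul_nonneg (Real.rpow_nonneg hm0.le _) hM'0) hc₂.le
  have key : ∫⁻ z, ENNReal.ofReal ((1 + r z) ^ (-s) / v z) ∂μ
      ≤ ∑' i, ENNReal.ofReal (K * (1 + ℓ i) ^ (-s)) := by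
    calc ∫⁻ z, ENNReal.ofReal ((1 + r z) ^ (-s) / v z) ∂μ
        ≤ ∫⁻ z, ∑' i, (T i).indicator (fun _ => ENNReal.ofReal (B i)) z ∂μ :=
          lintegral_mono hpt
      _ = ∑' i, ∫⁻ z, (T i).indicator (fun _ => ENNReal.ofReal (B i)) z ∂μ :=
          lintegral_tsum fun i =>
            (measurable_const.indicator (hTmeas i)).aemeasurable
      _ = ∑' i, ENNReal.ofReal (B i) * μ (piece i) := by
          refine tsum_congr fun i => ?_
          rw [lintegral_indicator_const (hTmeas i), measure_toMeasurable]
      _ ≤ ∑' i, ENNReal.ofReal (K * (1 + ℓ i) ^ (-s)) := by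
          refine ENNReal.tsum_le_tsum fun i => ?_
          have h1 : μ (piece i) ≤ ENNReal.ofReal (M' * v (y i)) :=
            (hM i).trans (ENNReal.ofReal_le_ofReal
              (mul_le_mul_of_nonneg_right (le_max_left _ _) (hv0 _).le))
          calc ENNReal.ofReal (B i) * μ (piece i)
              ≤ ENNReal.ofReal (B i) * ENNReal.ofReal (M' * v (y i)) :=
                mul_le_mul_right h1 _
            _ = ENNReal.ofReal (B i * (M' * v (y i))) :=
                (ENNReal.ofReal_mul (hB0 i)).symm
            _ = ENNReal.ofReal (K * (1 + ℓ i) ^ (-s)) := by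
                congr 1
                have hvy : v (y i) ≠ 0 := (hv0 _).ne'
                simp only [hBdef, hKdef]
                field_simp [hBdef, hKdef]
  have hfin : (∑' i, ENNReal.ofReal (K * (1 + ℓ i) ^ (-s))) < ⊤ := by
    have hnn : ∀ i, 0 ≤ K * (1 + ℓ i) ^ (-s) := fun i =>
      mul_nonneg hK0 (Real.rpow_nonneg (by linarith [hℓ0 i]) _)
    have hsum' : Summable fun i => K * (1 + ℓ i) ^ (-s) := hsum.mul_left K
    rw [← ENNReal.ofReal_tsum_of_nonneg hnn hsum']
    exact ENNReal.ofReal_lt_top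
  exact lt_of_le_of_lt key hfin
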